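/- Let N ≥ 1, n ≥ 1, δ > 0, α > 0, S > 0, and for each i ∈ {1, …, N} let z_i ∈ ℝⁿ and m_i ∈ {0, …, n}, with y_i := p(m_i) the prefix indicator vector (p(l)_k = 1 for k ≤ l, 0 otherwise). Define Ψ_α(z_i, y_i) := sup over u ∈ ℝⁿ and l ∈ {0,…,n} of [ ⟨u, p(l)⟩ − α( ‖u − z_i‖² + S ‖p(l) − y_i‖² ) ]. Then inf_{α > 0} [ α δ + (1/N) Σ_{i=1}^{N} Ψ_α(z_i, y_i) ] = (1/N) Σ_{i=1}^{N} ⟨z_i, y_i⟩ + min_{α > 0} [ α δ + (1/N) Σ_{i=1}^{N} max_{l ∈ {0,…,n}} ( l/(4α) + ( Σ_{k=1}^{l} (z_i)_k − Σ_{k=1}^{m_i} (z_i)_k ) − α S |l − m_i| ) ], and the minimum on the right-hand side is attained at some α* ∈ (0, ∞). -/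

import Mathlib

lemma aux_sum_ind (n l : ℕ) (hl : l ≤ n) :
    (∑ k : Fin n, (if (k : ℕ) < l then (1 : ℝ) else 0)) = l := by
  rw [Fin.sum_univ_eq_sum_range (fun k => if k < l then (1:ℝ) else 0)]
  rw [Finset.sum_boole]
  congr 1
  rw [show (Finset.range n).filter (fun k => k < l) = Finset.range l by
    ext k; simp [Finset.mem_filter, Finset.mem_range]; omega]
  simp

lemma aux_dist_sq (n l mm : ℕ) (hl : l ≤ n) (hmm : mm ≤ n) :
    (∑ k : Fin n, ((if (k : ℕ) < l then (1 : ℝ) else 0)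
        - (if (k : ℕ) < mm then (1 : ℝ) else 0)) ^ 2) = |(l : ℝ) - (mm : ℝ)| := by
  have hterm : ∀ k : Fin n, ((if (k : ℕ) < l then (1 : ℝ) else 0)
        - (if (k : ℕ) < mm then (1 : ℝ) else 0)) ^ 2
      = (if (k : ℕ) < l then (1 : ℝ) else 0) + (if (k : ℕ) < mm then (1 : ℝ) else 0)
        - 2 * (if (k : ℕ) < min l mm then (1 : ℝ) else 0) := by
    intro k
    simp only [lt_inf_iff]
    split_ifs <;> simp_all <;> norm_num
  rw [Finset.sum_congr rfl (fun k _ => hterm k), Finset.sum_sub_distrib,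
    Finset.sum_add_distrib, aux_sum_ind n l hl, aux_sum_ind n mm hmm, ← Finset.mul_sum,
    aux_sum_ind n (min l mm) (le_trans (min_le_left _ _) hl)]
  rcases le_total l mm with h | h
  · rw [min_eq_left h, abs_of_nonpos (by exact sub_nonpos.2 (Nat.cast_le.2 h))]; ring
  · rw [min_eq_right h, abs_of_nonneg (by exact sub_nonneg.2 (Nat.cast_le.2 h))]; ring

lemma aux_psi (n : ℕ) (α S : ℝ) (hα : 0 < α) (zi : Fin n → ℝ) (mi : ℕ) (hmi : mi ≤ n) :
    sSup {v : ℝ | ∃ u : Fin n → ℝ, ∃ l ≤ n,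
        v = (∑ k : Fin n, u k * (if (k : ℕ) < l then (1 : ℝ) else 0))
            - α * ((∑ k, (u k - zi k) ^ 2)
              + S * ∑ k : Fin n, ((if (k : ℕ) < l then (1 : ℝ) else 0)
                  - (if (k : ℕ) < mi then (1 : ℝ) else 0)) ^ 2)}
    = (Finset.range (n + 1)).sup' Finset.nonempty_range_add_one
        (fun l => (l : ℝ) / (4 * α) + (∑ k : Fin n, if (k : ℕ) < l then zi k else 0)
          - α * S * |(l : ℝ) - (mi : ℝ)|) := by
  set g : ℕ → ℝ := fun l => (l : ℝ) / (4 * α) + (∑ k : Fin n, if (k : ℕ) < l then zi k else 0)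
          - α * S * |(l : ℝ) - (mi : ℝ)| with hg
  apply IsGreatest.csSup_eq
  constructor
  · obtain ⟨l₀, hl₀mem, hsup⟩ := Finset.exists_mem_eq_sup' Finset.nonempty_range_add_one g
    have hl₀ : l₀ ≤ n := Finset.mem_range_succ_iff.mp hl₀mem
    refine ⟨fun k => zi k + (if (k : ℕ) < l₀ then (1:ℝ) else 0) / (2 * α), l₀, hl₀, ?_⟩
    rw [hsup]
    have h1 : ∀ k : Fin n,
        (zi k + (if (k : ℕ) < l₀ then (1:ℝ) else 0) / (2 * α)) * (if (k : ℕ) < l₀ then (1:ℝ) else 0)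
        = (if (k : ℕ) < l₀ then zi k else 0)
          + (1 / (2 * α)) * (if (k : ℕ) < l₀ then (1:ℝ) else 0) := by
      intro k; split_ifs <;> field_simp <;> ring
    have h2 : ∀ k : Fin n,
        ((zi k + (if (k : ℕ) < l₀ then (1:ℝ) else 0) / (2 * α)) - zi k) ^ 2
        = (1 / (4 * α ^ 2)) * (if (k : ℕ) < l₀ then (1:ℝ) else 0) := by
      intro k; split_ifs with h
      · field_simp; ring
      · simp
    rw [Finset.sum_congr rfl (fun k _ => h1 k), Finset.sum_congr rfl (fun k _ => h2 k),
      Finset.sum_add_distrib, ← Finset.mul_sum, ← Finset.mul_sum,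
      aux_sum_ind n l₀ hl₀, aux_dist_sq n l₀ mi hl₀ hmi, hg]
    field_simp
    ring
  · rintro v ⟨u, l, hl, rfl⟩
    have hmem : l ∈ Finset.range (n + 1) := Finset.mem_range_succ_iff.mpr hl
    have hle := Finset.le_sup' g hmem
    refine le_trans ?_ hle
    rw [hg]
    have key : ∀ k : Fin n, u k * (if (k : ℕ) < l then (1:ℝ) else 0) - α * (u k - zi k) ^ 2
        ≤ (if (k : ℕ) < l then zi k else 0) + (1 / (4 * α)) * (if (k : ℕ) < l then (1:ℝ) else 0) := by
      intro k
      have hc : 4 * α * (1 / (4 * α)) = 1 := by field_simp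
      have hc0 : 0 < 1 / (4 * α) := by positivity
      split_ifs with h
      · nlinarith [sq_nonneg (2 * α * (u k - zi k) - 1), hα]
      · have : 0 ≤ α * (u k - zi k) ^ 2 := by positivity
        simp only [mul_zero, add_zero]
        linarith
    have hsum := Finset.sum_le_sum (s := Finset.univ) (fun k _ => key k)
    rw [Finset.sum_sub_distrib, ← Finset.mul_sum, Finset.sum_add_distrib, ← Finset.mul_sum,
      aux_sum_ind n l hl] at hsum
    rw [aux_dist_sq n l mi hl hmi]
    have expand : (∑ k : Fin n, u k * (if (k : ℕ) < l then (1:ℝ) else 0))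
        - α * ((∑ k, (u k - zi k) ^ 2) + S * |(l : ℝ) - (mi : ℝ)|)
        = ((∑ k : Fin n, u k * (if (k : ℕ) < l then (1:ℝ) else 0))
            - α * ∑ k, (u k - zi k) ^ 2) - α * S * |(l : ℝ) - (mi : ℝ)| := by ring
    rw [expand]
    have : (1 / (4 * α)) * (l : ℝ) = (l : ℝ) / (4 * α) := by ring
    linarith [hsum]

/-- Dual side of Theorem 2.2 (robust FVA): the dual objective
F(α) = α δ + (1/N) Σᵢ Ψ_α(zᵢ, yᵢ) has infimum over α > 0 equal to the empirical
FVA plus the closed-form penalty term, with the minimum attained at some α* > 0. -/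
theorem stmt13 (N n : ℕ) (hN : 1 ≤ N) (hn : 1 ≤ n) (δ S : ℝ) (hδ : 0 < δ) (hS : 0 < S)
    (z : Fin N → Fin n → ℝ) (m : Fin N → ℕ) (hm : ∀ i, m i ≤ n)
    (Ψ : ℝ → Fin N → ℝ)
    (hΨ : ∀ (α : ℝ) (i : Fin N), Ψ α i =
      sSup {v : ℝ | ∃ u : Fin n → ℝ, ∃ l ≤ n,
        v = (∑ k : Fin n, u k * (if (k : ℕ) < l then (1 : ℝ) else 0))
            - α * ((∑ k, (u k - z i k) ^ 2)
              + S * ∑ k : Fin n, ((if (k : ℕ) < l then (1 : ℝ) else 0)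
                  - (if (k : ℕ) < m i then (1 : ℝ) else 0)) ^ 2)})
    (G : ℝ → ℝ)
    (hG : ∀ α : ℝ, G α =
      α * δ + (1 / (N : ℝ)) * ∑ i, (Finset.range (n + 1)).sup' Finset.nonempty_range_add_one
        (fun l => (l : ℝ) / (4 * α)
          + ((∑ k : Fin n, if (k : ℕ) < l then z i k else 0)
              - ∑ k : Fin n, if (k : ℕ) < m i then z i k else 0)
          - α * S * |(l : ℝ) - ((m i : ℕ) : ℝ)|)) :
    ∃ αstar ∈ Set.Ioi (0 : ℝ),
      (∀ α ∈ Set.Ioi (0 : ℝ), G αstar ≤ G α) ∧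
      sInf {v : ℝ | ∃ α ∈ Set.Ioi (0 : ℝ), v = α * δ + (1 / (N : ℝ)) * ∑ i, Ψ α i} =
        (1 / (N : ℝ)) * (∑ i, ∑ k : Fin n, z i k * (if (k : ℕ) < m i then (1 : ℝ) else 0))
          + G αstar := by
  have hN0 : (0:ℝ) < (N:ℝ) := by exact_mod_cast hN
  have hn0 : (0:ℝ) < (n:ℝ) := by exact_mod_cast hn
  set Sm : Fin N → ℝ := fun i => ∑ k : Fin n, if (k : ℕ) < m i then z i k else 0 with hSm
  set c : ℝ := (1 / (N : ℝ)) * (∑ i, ∑ k : Fin n, z i k * (if (k : ℕ) < m i then (1 : ℝ) else 0))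
    with hc
  set f : Fin N → ℕ → ℝ → ℝ := fun i l α => (l : ℝ) / (4 * α)
          + ((∑ k : Fin n, if (k : ℕ) < l then z i k else 0) - Sm i)
          - α * S * |(l : ℝ) - ((m i : ℕ) : ℝ)| with hf
  have hGf : ∀ α : ℝ, G α = α * δ + (1 / (N : ℝ)) *
      ∑ i, (Finset.range (n + 1)).sup' Finset.nonempty_range_add_one (fun l => f i l α) :=
    fun α => hG α
  -- Ψ in closed form
  have hPsi : ∀ α : ℝ, 0 < α → ∀ i : Fin N, Ψ α i = Sm i +
      (Finset.range (n + 1)).sup' Finset.nonempty_range_add_one (fun l => f i l α) := by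
    intro α hα i
    rw [hΨ α i, aux_psi n α S hα (z i) (m i) (hm i)]
    have hcomp := Finset.comp_sup'_eq_sup'_comp (s := Finset.range (n + 1))
      Finset.nonempty_range_add_one
      (f := fun l : ℕ => (l : ℝ) / (4 * α) + (∑ k : Fin n, if (k : ℕ) < l then z i k else 0)
          - α * S * |(l : ℝ) - ((m i : ℕ) : ℝ)|)
      (fun x : ℝ => x - Sm i) (fun x y => (max_sub_sub_right x y _).symm)
    have heq : ((fun x : ℝ => x - Sm i) ∘ (fun l : ℕ => (l : ℝ) / (4 * α)
        + (∑ k : Fin n, if (k : ℕ) < l then z i k else 0)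
        - α * S * |(l : ℝ) - ((m i : ℕ) : ℝ)|)) = fun l => f i l α := by
      funext l; simp only [Function.comp, hf]; ring
    rw [heq] at hcomp
    linarith [hcomp]
  -- key identity on the objective
  have Hkey : ∀ α : ℝ, 0 < α →
      α * δ + (1 / (N : ℝ)) * ∑ i, Ψ α i = c + G α := by
    intro α hα
    have : ∑ i, Ψ α i = (∑ i, Sm i) +
        ∑ i, (Finset.range (n + 1)).sup' Finset.nonempty_range_add_one (fun l => f i l α) := by
      rw [← Finset.sum_add_distrib]
      exact Finset.sum_congr rfl (fun i _ => hPsi α hα i)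
    rw [this, hGf α, hc]
    have hcsum : ∀ i : Fin N, (∑ k : Fin n, z i k * (if (k : ℕ) < m i then (1:ℝ) else 0)) = Sm i := by
      intro i
      refine Finset.sum_congr rfl (fun k _ => ?_)
      split_ifs <;> simp
    rw [Finset.sum_congr rfl (fun i _ => hcsum i)]
    ring
  -- lower bound: G α ≥ α δ
  have hlow1 : ∀ α : ℝ, 0 < α → α * δ ≤ G α := by
    intro α hα
    rw [hGf α]
    have hsup : ∀ i : Fin N, (0:ℝ) ≤
        (Finset.range (n + 1)).sup' Finset.nonempty_range_add_one (fun l => f i l α) := by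
      intro i
      refine le_trans ?_ (Finset.le_sup' (fun l => f i l α)
        (Finset.mem_range_succ_iff.mpr (hm i)))
      simp only [hf, sub_self, abs_zero, mul_zero, sub_zero, add_zero]
      rw [show (∑ k : Fin n, if (k : ℕ) < m i then z i k else 0) - Sm i = 0 from sub_self _, add_zero]
      positivity
    have : (0:ℝ) ≤ (1 / (N : ℝ)) * ∑ i, (Finset.range (n + 1)).sup'
        Finset.nonempty_range_add_one (fun l => f i l α) := by
      apply mul_nonneg (by positivity)
      exact Finset.sum_nonneg (fun i _ => hsup i)
    linarith
  -- lower bound for small α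
  set K : ℝ := (1 / (N : ℝ)) * ∑ i, ((∑ k : Fin n, if (k : ℕ) < n then z i k else 0) - Sm i)
    with hK
  have hlow2 : ∀ α : ℝ, 0 < α → α ≤ 1 → (n:ℝ) / (4 * α) + K - S * n ≤ G α := by
    intro α hα hα1
    rw [hGf α]
    have hsup : ∀ i : Fin N,
        (n:ℝ) / (4 * α) + ((∑ k : Fin n, if (k : ℕ) < n then z i k else 0) - Sm i) - S * n ≤
        (Finset.range (n + 1)).sup' Finset.nonempty_range_add_one (fun l => f i l α) := by
      intro i
      refine le_trans ?_ (Finset.le_sup' (fun l => f i l α)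
        (Finset.mem_range_succ_iff.mpr (le_refl n)))
      simp only [hf]
      have habs : |(n:ℝ) - ((m i : ℕ) : ℝ)| ≤ (n:ℝ) := by
        rw [abs_of_nonneg (sub_nonneg.2 (by exact_mod_cast hm i))]
        have : (0:ℝ) ≤ ((m i : ℕ) : ℝ) := Nat.cast_nonneg _
        linarith
      have : α * S * |(n:ℝ) - ((m i : ℕ) : ℝ)| ≤ S * n := by
        calc α * S * |(n:ℝ) - ((m i : ℕ) : ℝ)| ≤ 1 * S * (n:ℝ) := by
              apply mul_le_mul (by nlinarith) habs (abs_nonneg _) (by nlinarith)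
          _ = S * n := by ring
      linarith
    have hsum := Finset.sum_le_sum (s := Finset.univ) (fun i _ => hsup i)
    rw [Finset.sum_sub_distrib, Finset.sum_add_distrib] at hsum
    rw [Finset.sum_const, Finset.sum_const, Finset.card_univ, Fintype.card_fin,
      nsmul_eq_mul, nsmul_eq_mul] at hsum
    have hmul := mul_le_mul_of_nonneg_left hsum (by positivity : (0:ℝ) ≤ 1 / (N:ℝ))
    have hNN : (1 / (N:ℝ)) * (N:ℝ) = 1 := by field_simp
    have hexp : (1 / (N:ℝ)) * ((N:ℝ) * ((n:ℝ) / (4 * α)) +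
        (∑ i : Fin N, ((∑ k : Fin n, if (k : ℕ) < n then z i k else 0) - Sm i))
        - (N:ℝ) * (S * n))
        = (n:ℝ) / (4 * α) + K - S * n := by
      rw [hK]; field_simp
    calc (n:ℝ) / (4 * α) + K - S * n = (1 / (N:ℝ)) * ((N:ℝ) * ((n:ℝ) / (4 * α)) +
          (∑ i : Fin N, ((∑ k : Fin n, if (k : ℕ) < n then z i k else 0) - Sm i))
          - (N:ℝ) * (S * n)) := hexp.symm
      _ ≤ (1 / (N:ℝ)) * ∑ i, (Finset.range (n + 1)).sup'
          Finset.nonempty_range_add_one (fun l => f i l α) := by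
          apply mul_le_mul_of_nonneg_left _ (by positivity)
          linarith [hsum]
      _ ≤ α * δ + (1 / (N:ℝ)) * ∑ i, (Finset.range (n + 1)).sup'
          Finset.nonempty_range_add_one (fun l => f i l α) := by nlinarith
  -- choose the interval [a, b]
  set T : ℝ := max (G 1 - K + S * n) 1 with hT
  have hT0 : (0:ℝ) < T := lt_of_lt_of_le one_pos (le_max_right _ _)
  set a : ℝ := min ((n:ℝ) / (4 * T)) 1 with ha
  set b : ℝ := max (G 1 / δ) 1 with hb
  have ha0 : 0 < a := lt_min (by positivity) one_pos
  have ha1 : a ≤ 1 := min_le_right _ _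
  have hb1 : 1 ≤ b := le_max_right _ _
  have hsmall : ∀ α : ℝ, 0 < α → α ≤ a → G 1 ≤ G α := by
    intro α hα hαa
    have h1 : α * (4 * T) ≤ (n:ℝ) := by
      have := le_trans hαa (min_le_left _ _)
      calc α * (4 * T) = (4 * T) * α := by ring
        _ ≤ (4 * T) * ((n:ℝ) / (4 * T)) := by
            apply mul_le_mul_of_nonneg_left this (by positivity)
        _ = (n:ℝ) := by field_simp
    have h2 : T ≤ (n:ℝ) / (4 * α) := by
      rw [le_div_iff₀ (by positivity)]
      nlinarith
    have h3 : G 1 - K + S * n ≤ T := le_max_left _ _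
    have := hlow2 α hα (le_trans hαa ha1)
    linarith
  have hbig : ∀ α : ℝ, b ≤ α → G 1 ≤ G α := by
    intro α hbα
    have hα : 0 < α := lt_of_lt_of_le (lt_of_lt_of_le one_pos hb1) hbα
    have h1 : G 1 / δ ≤ α := le_trans (le_max_left _ _) hbα
    have h2 : G 1 ≤ α * δ := by
      rw [div_le_iff₀ hδ] at h1; linarith
    linarith [hlow1 α hα]
  -- continuity on [a, b]
  have hIcc : Set.Icc a b ⊆ Set.Ioi (0:ℝ) := fun x hx => lt_of_lt_of_le ha0 hx.1
  have hcont : ContinuousOn G (Set.Icc a b) := by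
    have hF : ContinuousOn (fun α => α * δ + (1 / (N : ℝ)) *
        ∑ i, (Finset.range (n + 1)).sup' Finset.nonempty_range_add_one (fun l => f i l α))
        (Set.Icc a b) := by
      apply ContinuousOn.add ((continuous_id.mul continuous_const).continuousOn)
      apply ContinuousOn.mul continuousOn_const
      apply continuousOn_finset_sum
      intro i _
      apply ContinuousOn.finset_sup'_apply Finset.nonempty_range_add_one
      intro l _
      apply ContinuousOn.sub
      apply ContinuousOn.add
      · apply ContinuousOn.div continuousOn_const
          ((continuous_const.mul continuous_id).continuousOn)
        intro x hx
        have : 0 < x := hIcc hx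
        exact mul_ne_zero (by norm_num) this.ne'
      · exact continuousOn_const
      · exact ((continuous_id.mul continuous_const).mul continuous_const).continuousOn
    exact hF.congr (fun x _ => hGf x)
  -- minimizer on [a, b]
  have hne : (Set.Icc a b).Nonempty := ⟨1, ha1, hb1⟩
  obtain ⟨αs, hαsIcc, hαsmin⟩ := isCompact_Icc.exists_isMinOn hne hcont
  have hαs0 : αs ∈ Set.Ioi (0:ℝ) := hIcc hαsIcc
  have hglobal : ∀ α ∈ Set.Ioi (0:ℝ), G αs ≤ G α := by
    intro α hα
    rcases le_or_gt α a with h | h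
    · exact le_trans (hαsmin ⟨ha1, hb1⟩) (hsmall α hα h)
    rcases le_or_gt b α with h' | h'
    · exact le_trans (hαsmin ⟨ha1, hb1⟩) (hbig α h')
    · exact hαsmin ⟨le_of_lt h, le_of_lt h'⟩
  refine ⟨αs, hαs0, hglobal, ?_⟩
  -- the sInf computation
  have hmemV : c + G αs ∈ {v : ℝ | ∃ α ∈ Set.Ioi (0 : ℝ),
      v = α * δ + (1 / (N : ℝ)) * ∑ i, Ψ α i} :=
    ⟨αs, hαs0, (Hkey αs hαs0).symm⟩
  have hlb : ∀ v ∈ {v : ℝ | ∃ α ∈ Set.Ioi (0 : ℝ),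
      v = α * δ + (1 / (N : ℝ)) * ∑ i, Ψ α i}, c + G αs ≤ v := by
    rintro v ⟨α, hα, rfl⟩
    rw [Hkey α hα]
    linarith [hglobal α hα]
  exact le_antisymm (csInf_le ⟨c + G αs, hlb⟩ hmemV) (le_csInf ⟨_, hmemV⟩ hlb)
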